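/- Let d ≥ 1, let v ∈ ℂ^d be a unit vector and let P := v vᴴ be the associated rank-one projection (the d×d matrix with entries P(i,j) = v(i)·conj(v(j))). Let σ be a density matrix (of size d×d) whose support is orthogonal to v, i.e. σ.mulVec v = 0. Then for every real F with 0 ≤ F ≤ 1, the matrix ρ := F•P + (1−F)•σ satisfies ‖P − ρ‖₁ = 2(1−F). -/

import Mathlib

open Matrix
open scoped ComplexOrder

open Classical in
/-- Positive semidefinite square root of a matrix (zero if not PSD). -/
noncomputable def msqrt {n : Type*} [Fintype n] [DecidableEq n] (A : Matrix n n ℂ) :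
    Matrix n n ℂ :=
  if h : A.PosSemidef then
    (h.1.eigenvectorUnitary : Matrix n n ℂ) * diagonal ((↑) ∘ (√·) ∘ h.1.eigenvalues) *
      (star h.1.eigenvectorUnitary : Matrix n n ℂ) else 0

/-- Trace norm of a complex square matrix: `Tr √(Aᴴ A)`. -/
noncomputable def traceNorm {n : Type*} [Fintype n] [DecidableEq n] (A : Matrix n n ℂ) : ℝ :=
  ((msqrt (Aᴴ * A)).trace).re

lemma psd_real_smul {n : Type*} [Fintype n] [DecidableEq n] {A : Matrix n n ℂ}
    (hA : A.PosSemidef) {c : ℝ} (hc : 0 ≤ c) : (c • A).PosSemidef := by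
  constructor
  · have := hA.isHermitian
    unfold Matrix.IsHermitian at *
    rw [conjTranspose_smul, this]
    simp
  · have h := (hA.smul (a := (c : ℂ)) (by exact_mod_cast hc)).2
    rwa [Complex.coe_smul] at h

theorem trace_dist_projector_mix (d : ℕ) (hd : 1 ≤ d) (v : Fin d → ℂ)
    (hv : ∑ i, (starRingEnd ℂ) (v i) * v i = 1)
    (P : Matrix (Fin d) (Fin d) ℂ) (hP : P = Matrix.of fun i j => v i * (starRingEnd ℂ) (v j))
    (σ : Matrix (Fin d) (Fin d) ℂ) (hσ : σ.PosSemidef) (hσtr : σ.trace = 1)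
    (hσv : σ.mulVec v = 0) (F : ℝ) (hF0 : 0 ≤ F) (hF1 : F ≤ 1) :
    traceNorm (P - (F • P + (1 - F) • σ)) = 2 * (1 - F) := by
  -- basic facts about P
  have hPH : P.IsHermitian := by
    subst hP; ext i j
    simp [Matrix.conjTranspose_apply, mul_comm]
  have hPP : P * P = P := by
    subst hP; ext i j
    simp only [Matrix.mul_apply, Matrix.of_apply]
    calc ∑ k, v i * (starRingEnd ℂ) (v k) * (v k * (starRingEnd ℂ) (v j))
        = (v i * (starRingEnd ℂ) (v j)) * ∑ k, (starRingEnd ℂ) (v k) * v k := by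
          rw [Finset.mul_sum]; congr 1; ext k; ring
      _ = v i * (starRingEnd ℂ) (v j) := by rw [hv, mul_one]
  have hσP : σ * P = 0 := by
    subst hP; ext i j
    simp only [Matrix.mul_apply, Matrix.of_apply, Matrix.zero_apply]
    have : ∑ k, σ i k * (v k * (starRingEnd ℂ) (v j))
        = (∑ k, σ i k * v k) * (starRingEnd ℂ) (v j) := by
      rw [Finset.sum_mul]; congr 1; ext k; ring
    rw [this, show (∑ k, σ i k * v k) = σ.mulVec v i from rfl, hσv]
    simp
  have hPσ : P * σ = 0 := by
    have := congrArg Matrix.conjTranspose hσP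
    rwa [conjTranspose_mul, hPH.eq, hσ.isHermitian.eq, conjTranspose_zero] at this
  have hPpsd : P.PosSemidef := by
    have : P = (Matrix.of fun (_ : Fin 1) j => (starRingEnd ℂ) (v j))ᴴ *
        (Matrix.of fun (_ : Fin 1) j => (starRingEnd ℂ) (v j)) := by
      subst hP; ext i j
      simp [Matrix.mul_apply, Matrix.conjTranspose_apply]
    rw [this]; exact posSemidef_conjTranspose_mul_self _
  -- the matrix and its candidate square root
  set A := P - (F • P + (1 - F) • σ) with hA
  have hAeq : A = (1 - F) • (P - σ) := by
    rw [hA]; ext i j; simp; ring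
  set S := (1 - F) • (P + σ) with hS
  have hSpsd : S.PosSemidef := psd_real_smul (hPpsd.add hσ) (by linarith)
  have hAH : Aᴴ = A := by
    rw [hAeq, conjTranspose_smul, conjTranspose_sub, hPH.eq, hσ.isHermitian.eq]
    norm_num
  have hkey : (P + σ) * (P + σ) = (P - σ) * (P - σ) := by
    rw [add_mul, mul_add, mul_add, sub_mul, mul_sub, mul_sub, hPσ, hσP]
    abel
  have hsq : S ^ 2 = Aᴴ * A := by
    rw [pow_two, hS, hAH, hAeq, smul_mul_smul_comm, smul_mul_smul_comm, hkey]
  have hB : (Aᴴ * A).PosSemidef := posSemidef_conjTranspose_mul_self A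
  have hmsqrt : msqrt (Aᴴ * A) = S := by
    rw [msqrt, dif_pos hB]
    open scoped MatrixOrder in
    have h1 : CFC.sqrt (Aᴴ * A) = S := CFC.sqrt_unique (by rw [← hsq, pow_two]) hSpsd.nonneg
    open scoped MatrixOrder in
    rw [CFC.sqrt_eq_real_sqrt _ hB.nonneg, cfcₙ_eq_cfc, hB.1.cfc_eq, IsHermitian.cfc,
      Unitary.conjStarAlgAut_apply] at h1
    exact h1
  have hPtr : P.trace = 1 := by
    subst hP
    rw [Matrix.trace]
    simp only [Matrix.diag_apply, Matrix.of_apply]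
    rw [← hv]; congr 1; ext i; ring
  rw [traceNorm, hmsqrt, hS, trace_smul, trace_add, hPtr, hσtr]
  simp
  ring
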